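/- Fundamental Theorem of Γ-convergence (value convergence): Let (X,d) be a metric space and let F_n : X → [-∞,+∞], n ∈ ℕ, be a sequence of functions which is equicoercive and which Γ-converges to a function F : X → [-∞,+∞]. Then F attains a minimum over X and min_X F = lim_n inf_X F_n. -/

import Mathlib

open Filter Topology

/-- The liminf of a sequence in `EReal` is a cluster point of the sequence. -/
private lemma mapClusterPt_liminf_aux (m : ℕ → EReal) :
    MapClusterPt (liminf m atTop) atTop m := by
  rw [mapClusterPt_iff_frequently]
  intro s hs
  rcases eq_top_or_lt_top (liminf m atTop) with hT | hT
  · rw [hT] at hs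
    rcases EReal.mem_nhds_top_iff.1 hs with ⟨r, hr⟩
    have hev : ∀ᶠ n in atTop, (r : EReal) < m n :=
      eventually_lt_of_lt_liminf (by rw [hT]; exact lt_top_iff_ne_top.2 (EReal.coe_ne_top r))
    exact (hev.mono fun n hn => hr hn).frequently
  rcases eq_bot_or_bot_lt (liminf m atTop) with hB | hB
  · rw [hB] at hs
    rcases EReal.mem_nhds_bot_iff.1 hs with ⟨r, hr⟩
    have hfr : ∃ᶠ n in atTop, m n < (r : EReal) :=
      frequently_lt_of_liminf_lt (by isBoundedDefault)
        (by rw [hB]; exact bot_lt_iff_ne_bot.2 (EReal.coe_ne_bot r))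
    exact hfr.mono fun n hn => hr hn
  · rcases (mem_nhds_iff_exists_Ioo_subset' ⟨⊥, hB⟩ ⟨⊤, hT⟩).1 hs with ⟨l, u, hmem, hsub⟩
    have h1 : ∃ᶠ n in atTop, m n < u :=
      frequently_lt_of_liminf_lt (by isBoundedDefault) hmem.2
    have h2 : ∀ᶠ n in atTop, l < m n := eventually_lt_of_lt_liminf hmem.1
    exact (h1.and_eventually h2).mono fun n hn => hsub ⟨hn.2, hn.1⟩

private lemma liminf_comp_le_aux (u : ℕ → EReal) (g : ℕ → ℕ) (hg : StrictMono g) :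
    liminf u atTop ≤ liminf (fun j => u (g j)) atTop := by
  have h1 : liminf u atTop ≤ liminf u (Filter.map g atTop) :=
    liminf_le_liminf_of_le (hg.tendsto_atTop)
  refine h1.trans_eq ?_
  rw [Filter.liminf, Filter.liminf, Filter.map_map]
  rfl

/-- Fundamental Theorem of Γ-convergence (value convergence):
if `Fn` is an equicoercive sequence of functionals on a metric space `X`
which Γ-converges to `F`, then `F` attains its minimum over `X` and
`min_X F = lim_n inf_X Fn`. -/
theorem gamma_convergence_fundamental_value
    {X : Type*} [MetricSpace X] [Nonempty X]
    (F : X → EReal) (Fn : ℕ → X → EReal)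
    (hliminf : ∀ x : X, ∀ xs : ℕ → X, Tendsto xs atTop (𝓝 x) →
      F x ≤ liminf (fun n => Fn n (xs n)) atTop)
    (hrecov : ∀ x : X, ∃ xs : ℕ → X, Tendsto xs atTop (𝓝 x) ∧
      Tendsto (fun n => Fn n (xs n)) atTop (𝓝 (F x)))
    (hequi : ∃ K : Set X, IsCompact K ∧ ∀ n : ℕ, ⨅ x ∈ K, Fn n x = ⨅ x : X, Fn n x) :
    ∃ xmin : X, (∀ x : X, F xmin ≤ F x) ∧
      Tendsto (fun n => ⨅ x : X, Fn n x) atTop (𝓝 (F xmin)) := by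
  classical
  obtain ⟨K, hK, hKinf⟩ := hequi
  set m : ℕ → EReal := fun n => ⨅ x : X, Fn n x with hm
  -- upper bound: limsup m ≤ F x for every x, via recovery sequences
  have hub : ∀ x : X, limsup m atTop ≤ F x := by
    intro x
    obtain ⟨xs, -, hxs⟩ := hrecov x
    calc limsup m atTop ≤ limsup (fun n => Fn n (xs n)) atTop :=
          limsup_le_limsup (Eventually.of_forall fun n => iInf_le _ _)
      _ = F x := hxs.limsup_eq
  by_cases hLtop : liminf m atTop = ⊤
  · -- degenerate case: everything is ⊤
    have hls : limsup m atTop = ⊤ :=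
      top_le_iff.1 (hLtop ▸ liminf_le_limsup)
    have hFtop : ∀ x : X, F x = ⊤ := fun x => top_le_iff.1 (hls ▸ hub x)
    refine ⟨Classical.arbitrary X, fun x => by rw [hFtop x]; exact le_top, ?_⟩
    rw [hFtop]
    exact tendsto_of_liminf_eq_limsup hLtop hls
  -- main case
  have hLlt : liminf m atTop < ⊤ := lt_top_iff_ne_top.2 hLtop
  set L : EReal := liminf m atTop with hLdef
  -- subsequence along which m tends to its liminf
  obtain ⟨φ, hφmono, hφtend⟩ :=
    TopologicalSpace.FirstCountableTopology.tendsto_subseq (mapClusterPt_liminf_aux m)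
  -- the comparison sequence c
  set c : ℕ → EReal := fun k => max (m (φ k)) ((-(k : ℝ) : ℝ) : EReal) +
      ((((k : ℝ) + 1)⁻¹ : ℝ) : EReal) with hc
  have hneg_tend : Tendsto (fun k : ℕ => ((-(k : ℝ) : ℝ) : EReal)) atTop (𝓝 ⊥) := by
    rw [EReal.tendsto_nhds_bot_iff_real]
    intro r
    filter_upwards [eventually_gt_atTop (Nat.ceil (|r| + 1))] with k hk
    have h1 : (-(k : ℝ)) < r := by
      have : |r| + 1 ≤ (k : ℝ) := le_trans (Nat.le_ceil _) (by exact_mod_cast hk.le)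
      nlinarith [abs_nonneg r, neg_abs_le r]
    exact_mod_cast EReal.coe_lt_coe_iff.2 h1
  have hmax_tend : Tendsto (fun k => max (m (φ k)) ((-(k : ℝ) : ℝ) : EReal)) atTop (𝓝 L) := by
    have := hφtend.max hneg_tend
    simpa using this
  have heps_tend : Tendsto (fun k : ℕ => ((((k : ℝ) + 1)⁻¹ : ℝ) : EReal)) atTop
      (𝓝 (0 : EReal)) := by
    have h0 : Tendsto (fun k : ℕ => (((k : ℝ) + 1)⁻¹ : ℝ)) atTop (𝓝 0) :=
      tendsto_one_div_add_atTop_nhds_zero_nat.congr (by intro k; simp [one_div])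
    exact EReal.tendsto_coe.2 h0
  have hc_tend : Tendsto c atTop (𝓝 L) := by
    have hcont : ContinuousAt (fun p : EReal × EReal => p.1 + p.2) (L, 0) :=
      EReal.continuousAt_add (Or.inr (by simp)) (Or.inr (by simp))
    have := hcont.tendsto.comp (hmax_tend.prodMk_nhds heps_tend)
    rw [add_zero] at this
    exact this
  -- m (φ k) < c k whenever m (φ k) ≠ ⊤
  have hm_lt_c : ∀ k : ℕ, m (φ k) ≠ ⊤ → m (φ k) < c k := by
    intro k hk
    have hkey : ∀ a : EReal, a ≠ ⊤ → a ≠ ⊥ → a < a + ((((k : ℝ) + 1)⁻¹ : ℝ) : EReal) := by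
      intro a haT haB
      lift a to ℝ using ⟨haT, haB⟩
      rw [← EReal.coe_add, EReal.coe_lt_coe_iff]
      have : (0 : ℝ) < ((k : ℝ) + 1)⁻¹ := by positivity
      linarith
    have haT : max (m (φ k)) ((-(k : ℝ) : ℝ) : EReal) ≠ ⊤ := by
      rw [ne_eq, max_eq_iff]
      rintro (⟨h1, -⟩ | ⟨h1, -⟩)
      · exact hk h1
      · exact EReal.coe_ne_top _ h1
    have haB : max (m (φ k)) ((-(k : ℝ) : ℝ) : EReal) ≠ ⊥ := by
      intro h
      have hle : ((-(k : ℝ) : ℝ) : EReal) ≤ max (m (φ k)) ((-(k : ℝ) : ℝ) : EReal) :=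
        le_max_right _ _
      rw [h] at hle
      exact EReal.coe_ne_bot _ (le_bot_iff.1 hle)
    exact lt_of_le_of_lt (le_max_left _ _) (hkey _ haT haB)
  have hev_ne_top : ∀ᶠ k in atTop, m (φ k) < ⊤ := hφtend.eventually_lt_const hLlt
  obtain ⟨N, hN⟩ := eventually_atTop.1 hev_ne_top
  -- K is nonempty
  have hKne : K.Nonempty := by
    have h1 : (⨅ x ∈ K, Fn (φ N) x) < c N := by
      rw [hKinf]
      exact hm_lt_c N (hN N le_rfl).ne
    by_contra h
    rw [Set.not_nonempty_iff_eq_empty] at h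
    simp [h] at h1
  -- choose near-minimizing points in K
  have hex : ∀ k : ℕ, ∃ y : X, y ∈ K ∧ (N ≤ k → Fn (φ k) y < c k) := by
    intro k
    by_cases hk : N ≤ k
    · have h1 : (⨅ x ∈ K, Fn (φ k) x) < c k := by
        rw [hKinf]
        exact hm_lt_c k (hN k hk).ne
      rw [iInf_lt_iff] at h1
      obtain ⟨y, hy⟩ := h1
      rw [iInf_lt_iff] at hy
      obtain ⟨hyK, hyc⟩ := hy
      exact ⟨y, hyK, fun _ => hyc⟩
    · exact ⟨hKne.choose, hKne.choose_spec, fun h => absurd h hk⟩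
  choose x hxK hxc using hex
  -- extract a convergent subsequence in K
  obtain ⟨xmin, hxminK, ψ, hψmono, hψtend⟩ := hK.tendsto_subseq hxK
  -- recovery sequence for the limit point
  obtain ⟨rs, hrs1, hrs2⟩ := hrecov xmin
  set g : ℕ → ℕ := fun j => φ (ψ j) with hg
  have hgmono : StrictMono g := hφmono.comp hψmono
  -- interleaved sequence
  set y : ℕ → X := fun n => if h : ∃ j, g j = n then x (ψ (Classical.choose h)) else rs n with hy
  have hy_g : ∀ j : ℕ, y (g j) = x (ψ j) := by
    intro j
    have h : ∃ j', g j' = g j := ⟨j, rfl⟩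
    have : Classical.choose h = j := hgmono.injective (Classical.choose_spec h)
    simp only [hy, dif_pos h, this]
  have hy_tend : Tendsto y atTop (𝓝 xmin) := by
    rw [Metric.tendsto_atTop] at hrs1 hψtend ⊢
    intro ε hε
    obtain ⟨N1, hN1⟩ := hrs1 ε hε
    obtain ⟨N2, hN2⟩ := hψtend ε hε
    refine ⟨max N1 (g N2), fun n hn => ?_⟩
    by_cases h : ∃ j, g j = n
    · have hys : y n = x (ψ (Classical.choose h)) := by simp only [hy, dif_pos h]
      rw [hys]
      have hgj : g (Classical.choose h) = n := Classical.choose_spec h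
      have hn2 : N2 ≤ Classical.choose h := by
        by_contra hc2
        push_neg at hc2
        have h1 := hgmono hc2
        rw [hgj] at h1
        exact absurd (lt_of_lt_of_le h1 (le_trans (le_max_right _ _) hn)) (lt_irrefl n)
      exact hN2 _ hn2
    · have hys : y n = rs n := by simp only [hy, dif_neg h]
      rw [hys]
      exact hN1 n (le_trans (le_max_left _ _) hn)
  -- the key chain of inequalities
  have hchain : F xmin ≤ L := by
    have h1 : F xmin ≤ liminf (fun n => Fn n (y n)) atTop := hliminf xmin y hy_tend
    have h2 : liminf (fun n => Fn n (y n)) atTop ≤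
        liminf (fun j => Fn (g j) (y (g j))) atTop :=
      liminf_comp_le_aux (fun n => Fn n (y n)) g hgmono
    have h3 : liminf (fun j => Fn (g j) (y (g j))) atTop =
        liminf (fun j => Fn (g j) (x (ψ j))) atTop := by
      congr 1
      funext j
      rw [hy_g j]
    have hcψ : Tendsto (fun j => c (ψ j)) atTop (𝓝 L) :=
      hc_tend.comp hψmono.tendsto_atTop
    have h4 : liminf (fun j => Fn (g j) (x (ψ j))) atTop ≤ L := by
      have hev : ∀ᶠ j in atTop, Fn (g j) (x (ψ j)) ≤ c (ψ j) := by
        filter_upwards [eventually_ge_atTop N] with j hj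
        exact (hxc (ψ j) (le_trans hj (hψmono.le_apply))).le
      calc liminf (fun j => Fn (g j) (x (ψ j))) atTop
          ≤ liminf (fun j => c (ψ j)) atTop := liminf_le_liminf hev
        _ = L := hcψ.liminf_eq
    calc F xmin ≤ liminf (fun n => Fn n (y n)) atTop := h1
      _ ≤ liminf (fun j => Fn (g j) (y (g j))) atTop := h2
      _ = liminf (fun j => Fn (g j) (x (ψ j))) atTop := h3
      _ ≤ L := h4
  -- conclude
  have hls_le : limsup m atTop ≤ F xmin := hub xmin
  have hLls : L ≤ limsup m atTop := liminf_le_limsup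
  have hall : F xmin = L := le_antisymm (hchain) (le_trans hLls hls_le)
  have hls_eq : limsup m atTop = F xmin := le_antisymm hls_le (hall ▸ hLls)
  refine ⟨xmin, fun x => le_trans (hall ▸ le_trans hLls (hub x) : F xmin ≤ F x) le_rfl, ?_⟩
  exact tendsto_of_liminf_eq_limsup (hall ▸ rfl : liminf m atTop = F xmin) hls_eq
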